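/- Let a > 0, p ∈ ℝ, and let a₁ : [0,1]×[0,∞) → ℝ be a fixed twice continuously differentiable function whose partial derivatives up to order 2 are bounded. For every γ > 0 there exist ε > 0 and M > 0 such that the following holds: for every continuous function c : [0,1]×[0,∞) → ℝ with |c(x,t)| < ε for all (x,t), and every twice continuously differentiable function w : [0,1]×[0,∞) → ℝ satisfying (∂_t − a ∂_x + a₁(x,t))(∂_t + a ∂_x) w + c·w = 0 on (0,1)×(0,∞), together with the boundary conditions w(0,t) = p·(∂_t w + a ∂_x w)(0,t) and (∂_t w + a ∂_x w)(1,t) = 0 for all t > 0, one has for all t > 0: (∫_0^1 w(x,t)² dx)^{1/2} ≤ M e^{−γ t} · max{ (∫_0^1 [w(x,0)² + (∂_x w(x,0))²] dx)^{1/2}, (∫_0^1 (∂_t w(x,0))² dx)^{1/2} }. -/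

import Mathlib

open MeasureTheory Set

private lemma key_ineq (a γ A B' ε κ Eb E1 E2 u v ux wx α cc : ℝ)
    (ha : 0 < a) (hγ : 0 < γ) (hA : 1 ≤ A) (hB' : 0 ≤ B') (hε : 0 < ε) (hε1 : ε ≤ 1)
    (haκ : a * κ = 2*γ + 2*B' + 2)
    (hE1 : 0 < E1) (hE2 : 0 < E2) (hE2E1 : E2 ≤ E1) (hEE : E1 ≤ Eb * E2)
    (hEb : A * Eb * ε ≤ 2*B' + 1)
    (hα : |α| ≤ B') (hcc : |cc| ≤ ε) :
    2*A*E1*u*(a*ux - α*u - cc*v) + 2*E2*v*(u - a*wx)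
      ≤ a*A*(κ*E1*u^2 + 2*E1*u*ux) - a*(-(κ*E2)*v^2 + 2*E2*v*wx)
        - 2*γ*(A*E1*u^2 + E2*v^2) := by
  obtain ⟨hα1, hα2⟩ := abs_le.1 hα
  obtain ⟨hc1, hc2⟩ := abs_le.1 hcc
  have hApos : 0 < A := lt_of_lt_of_le one_pos hA
  -- m1 = E1*u^2, m2 = E2*v^2
  have hm1 : 0 ≤ E1 * u^2 := by positivity
  have hm2 : 0 ≤ E2 * v^2 := by positivity
  -- T1 : -(2*A*E1*α*u^2) ≤ 2*A*B'*(E1*u^2)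
  have T1 : -(2*A*E1*α*u^2) ≤ 2*A*B'*(E1*u^2) := by nlinarith [mul_nonneg (mul_nonneg (le_of_lt hApos) hm1) (by linarith : (0:ℝ) ≤ B' + α)]
  -- T2 : -(2*A*E1*cc*(u*v)) ≤ A*ε*(E1*u^2) + A*ε*(E1*v^2)
  have T2 : -(2*A*E1*cc*(u*v)) ≤ A*ε*(E1*u^2) + A*ε*(E1*v^2) := by
    nlinarith [mul_nonneg (mul_nonneg hApos.le hE1.le) (mul_nonneg (by linarith : (0:ℝ) ≤ ε + cc) (sq_nonneg (u+v))),
      mul_nonneg (mul_nonneg hApos.le hE1.le) (mul_nonneg (by linarith : (0:ℝ) ≤ ε - cc) (sq_nonneg (u-v)))]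
  -- T3 : A*ε*(E1*v^2) ≤ (2*B'+1)*(E2*v^2)
  have T3 : A*ε*(E1*v^2) ≤ (2*B'+1)*(E2*v^2) := by
    have h1 : A*ε*(E1*v^2) ≤ A*ε*(Eb*E2*v^2) := by
      have := mul_le_mul_of_nonneg_right hEE (sq_nonneg v)
      nlinarith [mul_le_mul_of_nonneg_left (mul_le_mul_of_nonneg_right hEE (sq_nonneg v)) (by positivity : (0:ℝ) ≤ A*ε)]
    have h2 : A*ε*(Eb*E2*v^2) = (A*Eb*ε)*(E2*v^2) := by ring
    have h3 : (A*Eb*ε)*(E2*v^2) ≤ (2*B'+1)*(E2*v^2) := mul_le_mul_of_nonneg_right hEb hm2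
    linarith
  -- T5 : 2*E2*(v*u) ≤ E1*u^2 + E2*v^2
  have T5 : 2*E2*(v*u) ≤ E1*u^2 + E2*v^2 := by
    nlinarith [mul_nonneg hE2.le (sq_nonneg (u - v)), mul_le_mul_of_nonneg_right hE2E1 (sq_nonneg u)]
  -- coefficient inequality: (2*A*B' + A*ε + 1) * m1 ≤ A*(2*B'+2) * m1
  have hcoef : (2*A*B' + A*ε + 1) * (E1*u^2) ≤ (A*(2*B'+2)) * (E1*u^2) := by
    apply mul_le_mul_of_nonneg_right _ hm1
    nlinarith [mul_le_mul_of_nonneg_left hε1 hApos.le]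
  have key : a*A*(κ*E1*u^2 + 2*E1*u*ux) - a*(-(κ*E2)*v^2 + 2*E2*v*wx)
      - 2*γ*(A*E1*u^2 + E2*v^2)
      - (2*A*E1*u*(a*ux - α*u - cc*v) + 2*E2*v*(u - a*wx))
      = (a*κ)*(A*(E1*u^2)) + (a*κ)*(E2*v^2) - 2*γ*(A*(E1*u^2)) - 2*γ*(E2*v^2)
        + (2*A*E1*α*u^2) + (2*A*E1*cc*(u*v)) - 2*E2*(v*u) := by ring
  rw [haκ] at key
  linarith [T1, T2, T3, T5, hcoef]


private lemma sliceT' {F : ℝ × ℝ → ℝ} (hF : Differentiable ℝ F) (x t : ℝ) :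
    HasDerivAt (fun s => F (x, s)) (fderiv ℝ F (x, t) (0, 1)) t := by
  have h1 : HasDerivAt (fun s : ℝ => (x, s)) ((0 : ℝ), (1 : ℝ)) t :=
    HasDerivAt.prodMk (hasDerivAt_const t x) (hasDerivAt_id t)
  exact (hF (x, t)).hasFDerivAt.comp_hasDerivAt t h1

private lemma sliceX' {F : ℝ × ℝ → ℝ} (hF : Differentiable ℝ F) (x t : ℝ) :
    HasDerivAt (fun y => F (y, t)) (fderiv ℝ F (x, t) (1, 0)) x := by
  have h1 : HasDerivAt (fun y : ℝ => (y, t)) ((1 : ℝ), (0 : ℝ)) x :=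
    HasDerivAt.prodMk (hasDerivAt_id x) (hasDerivAt_const x t)
  exact (hF (x, t)).hasFDerivAt.comp_hasDerivAt x h1


set_option maxHeartbeats 2000000 in
/-- extension of Theorem 1 to equations with a first-order term,
Section 3.3 of the paper, for classical solutions. Let `a > 0`, `p ∈ ℝ`, and let `a₁`
be a fixed `C²` function with partial derivatives up to order 2 bounded. For every
`γ > 0` there exist `ε > 0` and `M > 0` such that for every continuous `c` with
`|c| < ε` and every `C²` solution `w` of
`(∂ₜ − a∂ₓ + a₁)(∂ₜ + a∂ₓ)w + c·w = 0` with the boundary conditions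
`w(0,t) = p·(wₜ + a wₓ)(0,t)`, `(wₜ + a wₓ)(1,t) = 0`, one has, for all `t > 0`,
`‖w(·,t)‖_{L²} ≤ M e^{−γt} max(‖w(·,0)‖_{H¹}, ‖wₜ(·,0)‖_{L²})`. -/
theorem generalized_wave_L2_exponential_stability
    (a p : ℝ) (ha : 0 < a)
    (a₁ : ℝ → ℝ → ℝ)
    (ha₁ : ContDiff ℝ 2 (fun q : ℝ × ℝ => a₁ q.1 q.2))
    (ha₁b : ∃ B : ℝ, ∀ k : ℕ, k ≤ 2 → ∀ q : ℝ × ℝ,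
      ‖iteratedFDeriv ℝ k (fun q : ℝ × ℝ => a₁ q.1 q.2) q‖ ≤ B) :
    ∀ γ > (0:ℝ), ∃ ε > (0:ℝ), ∃ M > (0:ℝ),
      ∀ c : ℝ → ℝ → ℝ,
        Continuous (fun q : ℝ × ℝ => c q.1 q.2) →
        (∀ x ∈ Set.Icc (0:ℝ) 1, ∀ t ≥ (0:ℝ), |c x t| < ε) →
      ∀ w : ℝ → ℝ → ℝ,
        ContDiff ℝ 2 (fun q : ℝ × ℝ => w q.1 q.2) →
        -- (∂ₜ − a∂ₓ + a₁)(∂ₜ + a∂ₓ)w + c·w = 0 on (0,1)×(0,∞), i.e.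
        -- u := ∂ₜw + a∂ₓw satisfies ∂ₜu − a∂ₓu + a₁·u + c·w = 0 there
        (∀ x ∈ Set.Ioo (0:ℝ) 1, ∀ t > (0:ℝ),
          deriv (fun s => deriv (w x) s + a * deriv (fun y => w y s) x) t
            - a * deriv (fun y => deriv (w y) t + a * deriv (fun z => w z t) y) x
            + a₁ x t * (deriv (w x) t + a * deriv (fun y => w y t) x)
            + c x t * w x t = 0) →
        -- boundary condition at x = 0 : w(0,t) = p (wₜ + a wₓ)(0,t)
        (∀ t > (0:ℝ),
          w 0 t = p * (deriv (w 0) t + a * deriv (fun y => w y t) 0)) →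
        -- boundary condition at x = 1 : (wₜ + a wₓ)(1,t) = 0
        (∀ t > (0:ℝ),
          deriv (w 1) t + a * deriv (fun y => w y t) 1 = 0) →
      ∀ t > (0:ℝ),
        Real.sqrt (∫ x in (0:ℝ)..1, (w x t) ^ 2) ≤
          M * Real.exp (-γ * t) *
            max (Real.sqrt (∫ x in (0:ℝ)..1,
                  ((w x 0) ^ 2 + (deriv (fun y => w y 0) x) ^ 2)))
                (Real.sqrt (∫ x in (0:ℝ)..1, (deriv (w x) 0) ^ 2)) := by
  intro γ hγ
  obtain ⟨B, hB⟩ := ha₁b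
  set B' := max B 0 with hB'def
  have hB'0 : 0 ≤ B' := le_max_right _ _
  have ha₁bd : ∀ x t : ℝ, |a₁ x t| ≤ B' := by
    intro x t
    have h := hB 0 (by norm_num) (x, t)
    rw [norm_iteratedFDeriv_zero] at h
    exact le_trans h (le_max_left _ _)
  set κ := (2*γ + 2*B' + 2) / a with hκdef
  have hκpos : 0 < κ := by
    apply div_pos (by linarith) ha
  have haκ : a * κ = 2*γ + 2*B' + 2 := by
    rw [hκdef]; field_simp
  set A := p^2 + 1 with hAdef
  have hA1 : 1 ≤ A := by nlinarith [sq_nonneg p]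
  have hApos : 0 < A := by linarith
  set ε := min 1 ((2*B'+1) / (A * Real.exp (2*κ))) with hεdef
  have hεpos : 0 < ε := lt_min one_pos (by positivity)
  have hε1 : ε ≤ 1 := min_le_left _ _
  have hεκ : A * Real.exp (2*κ) * ε ≤ 2*B'+1 := by
    have h2 : ε ≤ (2*B'+1) / (A * Real.exp (2*κ)) := min_le_right _ _
    rw [le_div_iff₀ (by positivity)] at h2
    linarith
  set C := 2*A*Real.exp κ*(1+a^2) + 1 with hCdef
  have hCpos : 0 < C := by positivity
  refine ⟨ε, hεpos, Real.sqrt (Real.exp κ * C), Real.sqrt_pos.2 (by positivity), ?_⟩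
  intro c hccont hcb w hw heq hbc0 hbc1 t ht
  -- ### Setup: partial derivatives
  set W : ℝ × ℝ → ℝ := fun q => w q.1 q.2 with hWdef
  have hWd : Differentiable ℝ W := hw.differentiable (by norm_num)
  set Wt : ℝ × ℝ → ℝ := fun q => fderiv ℝ W q (0, 1) with hWtdef
  set Wx : ℝ × ℝ → ℝ := fun q => fderiv ℝ W q (1, 0) with hWxdef
  have hWt : ∀ x t : ℝ, HasDerivAt (w x) (Wt (x, t)) t := fun x t => sliceT' hWd x t
  have hWx : ∀ x t : ℝ, HasDerivAt (fun y => w y t) (Wx (x, t)) x := fun x t => sliceX' hWd x t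
  have hWt1 : ContDiff ℝ 1 Wt :=
    (hw.fderiv_right (by norm_num : (1 : WithTop ℕ∞) + 1 ≤ 2)).clm_apply contDiff_const
  have hWx1 : ContDiff ℝ 1 Wx :=
    (hw.fderiv_right (by norm_num : (1 : WithTop ℕ∞) + 1 ≤ 2)).clm_apply contDiff_const
  set U : ℝ × ℝ → ℝ := fun q => Wt q + a * Wx q with hUdef
  have hUval : ∀ q : ℝ × ℝ, U q = Wt q + a * Wx q := fun q => by rw [hUdef]
  have hU1 : ContDiff ℝ 1 U := hWt1.add (contDiff_const.mul hWx1)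
  have hUd : Differentiable ℝ U := hU1.differentiable (by norm_num)
  set Ut : ℝ × ℝ → ℝ := fun q => fderiv ℝ U q (0, 1) with hUtdef
  set Ux : ℝ × ℝ → ℝ := fun q => fderiv ℝ U q (1, 0) with hUxdef
  have hUt : ∀ x t : ℝ, HasDerivAt (fun s => U (x, s)) (Ut (x, t)) t := fun x t => sliceT' hUd x t
  have hUx : ∀ x t : ℝ, HasDerivAt (fun y => U (y, t)) (Ux (x, t)) x := fun x t => sliceX' hUd x t
  have hWcont : Continuous W := hw.continuous
  have hWtcont : Continuous Wt := hWt1.continuous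
  have hWxcont : Continuous Wx := hWx1.continuous
  have hUcont : Continuous U := hU1.continuous
  have hUtcont : Continuous Ut :=
    ((hU1.fderiv_right (by norm_num : (0 : WithTop ℕ∞) + 1 ≤ 1)).clm_apply contDiff_const).continuous
  have hUxcont : Continuous Ux :=
    ((hU1.fderiv_right (by norm_num : (0 : WithTop ℕ∞) + 1 ≤ 1)).clm_apply contDiff_const).continuous
  have hderivT : ∀ x t : ℝ, deriv (w x) t = Wt (x, t) := fun x t => (hWt x t).deriv
  have hderivX : ∀ x t : ℝ, deriv (fun y => w y t) x = Wx (x, t) := fun x t => (hWx x t).deriv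
  -- ### Translation of the PDE and boundary conditions
  have hPDE : ∀ x ∈ Set.Ioo (0:ℝ) 1, ∀ τ > (0:ℝ),
      Ut (x, τ) = a * Ux (x, τ) - a₁ x τ * U (x, τ) - c x τ * W (x, τ) := by
    intro x hx τ hτ
    have h := heq x hx τ hτ
    have e1 : (fun s => deriv (w x) s + a * deriv (fun y => w y s) x) = (fun s => U (x, s)) := by
      funext s
      rw [hderivT, hderivX, ← hUval (x, s)]
    have e2 : (fun y => deriv (w y) τ + a * deriv (fun z => w z τ) y) = (fun y => U (y, τ)) := by
      funext y
      rw [hderivT, hderivX, ← hUval (y, τ)]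
    rw [e1, e2, (hUt x τ).deriv, (hUx x τ).deriv, hderivT, hderivX, ← hUval (x, τ)] at h
    have hWxt : W (x, τ) = w x τ := by rw [hWdef]
    rw [← hWxt] at h
    linarith
  have hU1t : ∀ τ > (0:ℝ), U (1, τ) = 0 := by
    intro τ hτ
    have h := hbc1 τ hτ
    rw [hderivT, hderivX, ← hUval (1, τ)] at h
    exact h
  have hW0t : ∀ τ > (0:ℝ), W (0, τ) = p * U (0, τ) := by
    intro τ hτ
    have h := hbc0 τ hτ
    rw [hderivT, hderivX, ← hUval (0, τ)] at h
    exact h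
  -- ### The Lyapunov density f, its time derivative ft, flux g and its x-derivative gx
  set f : ℝ × ℝ → ℝ := fun q =>
    A * Real.exp (κ * q.1) * U q ^ 2 + Real.exp (-(κ * q.1)) * W q ^ 2 with hfdef
  set ft : ℝ × ℝ → ℝ := fun q =>
    A * Real.exp (κ * q.1) * (2 * U q * Ut q) + Real.exp (-(κ * q.1)) * (2 * W q * Wt q) with hftdef
  set g : ℝ × ℝ → ℝ := fun q =>
    a * A * Real.exp (κ * q.1) * U q ^ 2 - a * Real.exp (-(κ * q.1)) * W q ^ 2 with hgdef
  set gx : ℝ × ℝ → ℝ := fun q =>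
    a * A * (κ * Real.exp (κ * q.1) * U q ^ 2 + 2 * Real.exp (κ * q.1) * U q * Ux q)
      - a * (-(κ * Real.exp (-(κ * q.1))) * W q ^ 2
          + 2 * Real.exp (-(κ * q.1)) * W q * Wx q) with hgxdef
  have hfcont : Continuous f := by
    rw [hfdef]
    fun_prop
  have hftcont : Continuous ft := by
    rw [hftdef]
    fun_prop
  have hgxcont : Continuous gx := by
    rw [hgxdef]
    fun_prop
  -- time derivative of x-slices of f
  have hfderivT : ∀ x τ : ℝ, HasDerivAt (fun s => f (x, s)) (ft (x, τ)) τ := by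
    intro x τ
    have h1 : HasDerivAt (fun s => U (x, s)) (Ut (x, τ)) τ := hUt x τ
    have h2 : HasDerivAt (fun s => W (x, s)) (Wt (x, τ)) τ := hWt x τ
    have h : HasDerivAt
        (fun s => A * Real.exp (κ * x) * U (x, s) ^ 2 + Real.exp (-(κ * x)) * W (x, s) ^ 2)
        (A * Real.exp (κ * x) * (2 * U (x, τ) * Ut (x, τ))
          + Real.exp (-(κ * x)) * (2 * W (x, τ) * Wt (x, τ))) τ := by
      have hu2 : HasDerivAt (fun s => U (x, s) ^ 2) (2 * U (x, τ) * Ut (x, τ)) τ := by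
        simpa using h1.fun_pow 2
      have hw2 : HasDerivAt (fun s => W (x, s) ^ 2) (2 * W (x, τ) * Wt (x, τ)) τ := by
        simpa using h2.fun_pow 2
      exact (hu2.const_mul _).add (hw2.const_mul _)
    exact h
  -- x derivative of t-slices of g
  have hgderivX : ∀ x τ : ℝ, HasDerivAt (fun y => g (y, τ)) (gx (x, τ)) x := by
    intro x τ
    have h1 : HasDerivAt (fun y => U (y, τ)) (Ux (x, τ)) x := hUx x τ
    have h2 : HasDerivAt (fun y => W (y, τ)) (Wx (x, τ)) x := hWx x τ
    have h0 : HasDerivAt (fun y : ℝ => κ * y) κ x := by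
      simpa using (hasDerivAt_id x).const_mul κ
    have he1 : HasDerivAt (fun y : ℝ => Real.exp (κ * y)) (Real.exp (κ * x) * κ) x := h0.exp
    have he2 : HasDerivAt (fun y : ℝ => Real.exp (-(κ * y))) (Real.exp (-(κ * x)) * (-κ)) x :=
      h0.neg.exp
    have hu2 : HasDerivAt (fun y => U (y, τ) ^ 2) (2 * U (x, τ) * Ux (x, τ)) x := by
      simpa using h1.fun_pow 2
    have hw2 : HasDerivAt (fun y => W (y, τ) ^ 2) (2 * W (x, τ) * Wx (x, τ)) x := by
      simpa using h2.fun_pow 2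
    have hterm1 : HasDerivAt (fun y => a * A * Real.exp (κ * y) * U (y, τ) ^ 2)
        (a * A * (κ * Real.exp (κ * x) * U (x, τ) ^ 2
          + 2 * Real.exp (κ * x) * U (x, τ) * Ux (x, τ))) x := by
      have := ((he1.const_mul (a * A)).fun_mul hu2)
      exact this.congr_deriv (by ring)
    have hterm2 : HasDerivAt (fun y => a * Real.exp (-(κ * y)) * W (y, τ) ^ 2)
        (a * (-(κ * Real.exp (-(κ * x))) * W (x, τ) ^ 2
          + 2 * Real.exp (-(κ * x)) * W (x, τ) * Wx (x, τ))) x := by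
      have := ((he2.const_mul a).fun_mul hw2)
      exact this.congr_deriv (by ring)
    have := hterm1.sub hterm2
    exact this
  -- ### V and G
  set V : ℝ → ℝ := fun τ => ∫ x in (0:ℝ)..1, f (x, τ) with hVdef
  set G : ℝ → ℝ := fun τ => ∫ x in (0:ℝ)..1, ft (x, τ) with hGdef
  have hslicecont : ∀ (H : ℝ × ℝ → ℝ), Continuous H → ∀ τ : ℝ, Continuous (fun x => H (x, τ)) :=
    fun H hH τ => hH.comp (continuous_id.prodMk continuous_const)
  have hVderiv : ∀ τ₀ : ℝ, HasDerivAt V (G τ₀) τ₀ := by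
    intro τ₀
    have hK : IsCompact ((Set.Icc (0:ℝ) 1) ×ˢ (Set.Icc (τ₀ - 1) (τ₀ + 1))) :=
      isCompact_Icc.prod isCompact_Icc
    obtain ⟨Cb, hCb⟩ := hK.exists_bound_of_continuousOn hftcont.continuousOn
    have main : HasDerivAt (fun τ => ∫ x in (0:ℝ)..1, f (x, τ)) (∫ x in (0:ℝ)..1, ft (x, τ₀)) τ₀ := by
      refine (intervalIntegral.hasDerivAt_integral_of_dominated_loc_of_deriv_le
        (𝕜 := ℝ) (E := ℝ) (μ := volume) (F := fun τ x => f (x, τ)) (F' := fun τ x => ft (x, τ))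
        (bound := fun _ => Cb) (Metric.ball_mem_nhds τ₀ one_pos) ?_ ?_ ?_ ?_ ?_ ?_).2
      · exact Filter.Eventually.of_forall fun τ =>
          ((hslicecont f hfcont τ)).aestronglyMeasurable.restrict
      · exact ((hslicecont f hfcont τ₀)).intervalIntegrable 0 1
      · exact ((hslicecont ft hftcont τ₀)).aestronglyMeasurable.restrict
      · refine Filter.Eventually.of_forall fun x hx τ hτ => ?_
        apply hCb
        constructor
        · rw [Set.uIoc_of_le (by norm_num : (0:ℝ) ≤ 1)] at hx
          exact ⟨le_of_lt hx.1, hx.2⟩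
        · have h1 := Metric.mem_ball.1 hτ
          rw [Real.dist_eq] at h1
          have h2 := abs_sub_lt_iff.1 h1
          exact ⟨by linarith [h2.1, h2.2], by linarith [h2.1, h2.2]⟩
      · exact intervalIntegrable_const
      · exact Filter.Eventually.of_forall fun x _ τ _ => hfderivT x τ
    exact main
  -- integrability helpers
  have hIf : ∀ τ : ℝ, IntervalIntegrable (fun x => f (x, τ)) volume 0 1 :=
    fun τ => (hslicecont f hfcont τ).intervalIntegrable 0 1
  have hIft : ∀ τ : ℝ, IntervalIntegrable (fun x => ft (x, τ)) volume 0 1 :=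
    fun τ => (hslicecont ft hftcont τ).intervalIntegrable 0 1
  have hIgx : ∀ τ : ℝ, IntervalIntegrable (fun x => gx (x, τ)) volume 0 1 :=
    fun τ => (hslicecont gx hgxcont τ).intervalIntegrable 0 1
  -- flux identity and sign
  have hflux : ∀ τ : ℝ, (∫ x in (0:ℝ)..1, gx (x, τ)) = g (1, τ) - g (0, τ) := fun τ =>
    intervalIntegral.integral_eq_sub_of_hasDerivAt (fun x _ => hgderivX x τ) (hIgx τ)
  have hfluxle : ∀ τ > (0:ℝ), g (1, τ) - g (0, τ) ≤ 0 := by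
    intro τ hτ
    have h1 := hU1t τ hτ
    have h0 := hW0t τ hτ
    have e1 : g (1, τ) = -(a * Real.exp (-(κ * 1)) * W (1, τ) ^ 2) := by
      rw [hgdef]; simp only; rw [h1]; ring
    have e0 : g (0, τ) = a * U (0, τ) ^ 2 := by
      rw [hgdef]; simp only; rw [h0, hAdef]
      norm_num [Real.exp_zero]
      ring
    rw [e1, e0]
    have p1 : 0 ≤ a * Real.exp (-(κ * 1)) * W (1, τ) ^ 2 := by positivity
    have p2 : 0 ≤ a * U (0, τ) ^ 2 := by positivity
    linarith
  -- pointwise inequality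
  have hpt : ∀ τ > (0:ℝ), ∀ x ∈ Set.Ioo (0:ℝ) 1, ft (x, τ) ≤ gx (x, τ) - 2 * γ * f (x, τ) := by
    intro τ hτ x hx
    have hWtval : Wt (x, τ) = U (x, τ) - a * Wx (x, τ) := by rw [hUval]; ring
    have hE2E1 : Real.exp (-(κ * x)) ≤ Real.exp (κ * x) :=
      Real.exp_le_exp.2 (by nlinarith [hx.1, hκpos])
    have hEE : Real.exp (κ * x) ≤ Real.exp (2 * κ) * Real.exp (-(κ * x)) := by
      rw [← Real.exp_add]
      exact Real.exp_le_exp.2 (by nlinarith [hx.2, hκpos])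
    have hcc : |c x τ| ≤ ε := (hcb x ⟨hx.1.le, hx.2.le⟩ τ hτ.le).le
    have hk := key_ineq a γ A B' ε κ (Real.exp (2 * κ)) (Real.exp (κ * x)) (Real.exp (-(κ * x)))
      (U (x, τ)) (W (x, τ)) (Ux (x, τ)) (Wx (x, τ)) (a₁ x τ) (c x τ)
      ha hγ hA1 hB'0 hεpos hε1 haκ (Real.exp_pos _) (Real.exp_pos _) hE2E1 hEE hεκ
      (ha₁bd x τ) hcc
    have hPDEx := hPDE x hx τ hτ
    simp only [hfdef, hftdef, hgxdef]
    rw [hPDEx, hWtval]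
    ring_nf
    ring_nf at hk
    linarith [hk]
  -- G ≤ -2γ V
  have hGle : ∀ τ > (0:ℝ), G τ ≤ -(2 * γ) * V τ := by
    intro τ hτ
    have hae : ∀ᵐ x ∂(volume.restrict (Set.Icc (0:ℝ) 1)),
        (fun x => ft (x, τ)) x ≤ (fun x => gx (x, τ) - 2 * γ * f (x, τ)) x := by
      have h01 : (volume : Measure ℝ) ({0, 1} : Set ℝ) = 0 :=
        ((Set.finite_singleton (1:ℝ)).insert 0).measure_zero volume
      have hae0 : ∀ᵐ x : ℝ ∂volume, x ∉ ({0, 1} : Set ℝ) :=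
        (MeasureTheory.measure_eq_zero_iff_ae_notMem (μ := volume)).1 h01
      filter_upwards [MeasureTheory.ae_restrict_mem measurableSet_Icc,
        MeasureTheory.ae_restrict_of_ae hae0] with x hx hx'
      simp only [Set.mem_insert_iff, Set.mem_singleton_iff, not_or] at hx'
      exact hpt τ hτ x ⟨lt_of_le_of_ne hx.1 (Ne.symm hx'.1), lt_of_le_of_ne hx.2 hx'.2⟩
    have h1 : G τ ≤ ∫ x in (0:ℝ)..1, (gx (x, τ) - 2 * γ * f (x, τ)) := by
      rw [hGdef]
      exact intervalIntegral.integral_mono_ae_restrict (by norm_num) (hIft τ)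
        ((hIgx τ).sub ((hIf τ).const_mul (2 * γ))) hae
    have h2 : (∫ x in (0:ℝ)..1, (gx (x, τ) - 2 * γ * f (x, τ)))
        = (g (1, τ) - g (0, τ)) - 2 * γ * V τ := by
      rw [intervalIntegral.integral_sub (hIgx τ) ((hIf τ).const_mul (2 * γ)),
        hflux τ, intervalIntegral.integral_const_mul, hVdef]
    linarith [hfluxle τ hτ]
  -- nonnegativity of V
  have hVnonneg : ∀ τ : ℝ, 0 ≤ V τ := by
    intro τ
    rw [hVdef]
    apply intervalIntegral.integral_nonneg (by norm_num)
    intro x _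
    simp only [hfdef]
    positivity
  -- Gronwall: V τ ≤ exp(-2γτ) V 0
  have hdecay : ∀ τ : ℝ, 0 ≤ τ → V τ ≤ Real.exp (-(2 * γ) * τ) * V 0 := by
    intro τ hτ
    have hhd : ∀ s : ℝ, HasDerivAt (fun r => Real.exp (2 * γ * r) * V r)
        (Real.exp (2 * γ * s) * (2 * γ) * V s + Real.exp (2 * γ * s) * G s) s := by
      intro s
      have h0 : HasDerivAt (fun r : ℝ => 2 * γ * r) (2 * γ) s := by
        simpa using (hasDerivAt_id s).const_mul (2 * γ)
      exact h0.exp.mul (hVderiv s)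
    have hanti : AntitoneOn (fun r => Real.exp (2 * γ * r) * V r) (Set.Ici (0:ℝ)) := by
      apply antitoneOn_of_deriv_nonpos (convex_Ici 0)
      · exact fun s _ => (hhd s).differentiableAt.continuousAt.continuousWithinAt
      · intro s _
        exact (hhd s).differentiableAt.differentiableWithinAt
      · intro s hs
        rw [interior_Ici] at hs
        rw [(hhd s).deriv]
        have h2 := mul_le_mul_of_nonneg_left (hGle s hs) (Real.exp_pos (2 * γ * s)).le
        nlinarith [h2]
    have h1 : Real.exp (2 * γ * τ) * V τ ≤ Real.exp (2 * γ * 0) * V 0 :=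
      hanti Set.self_mem_Ici (Set.mem_Ici.2 hτ) hτ
    rw [mul_zero, Real.exp_zero, one_mul] at h1
    have h3 := mul_le_mul_of_nonneg_left h1 (Real.exp_pos (-(2 * γ) * τ)).le
    have h4 : Real.exp (-(2 * γ) * τ) * (Real.exp (2 * γ * τ) * V τ) = V τ := by
      rw [← mul_assoc, ← Real.exp_add]
      norm_num
    linarith [h3, h4.symm.le, h4.le]
  -- initial data integrals rewritten in terms of W, Wx, Wt
  have e1 : Set.EqOn (fun x => ((w x 0) ^ 2 + (deriv (fun y => w y 0) x) ^ 2))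
      (fun x => (W (x, 0) ^ 2 + Wx (x, 0) ^ 2)) (Set.uIcc (0:ℝ) 1) := by
    intro x _
    simp only [hWdef, hderivX]
  have hI1eq := intervalIntegral.integral_congr (μ := volume) e1
  have e2 : Set.EqOn (fun x => (deriv (w x) 0) ^ 2) (fun x => Wt (x, 0) ^ 2)
      (Set.uIcc (0:ℝ) 1) := by
    intro x _
    simp only [hderivT]
  have hI2eq := intervalIntegral.integral_congr (μ := volume) e2
  have hIW0 : IntervalIntegrable (fun x => W (x, 0) ^ 2 + Wx (x, 0) ^ 2) volume 0 1 :=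
    (((hslicecont W hWcont 0).pow 2).add ((hslicecont Wx hWxcont 0).pow 2)).intervalIntegrable 0 1
  have hIWt0 : IntervalIntegrable (fun x => Wt (x, 0) ^ 2) volume 0 1 :=
    ((hslicecont Wt hWtcont 0).pow 2).intervalIntegrable 0 1
  have hI1nn : (0:ℝ) ≤ ∫ x in (0:ℝ)..1, ((w x 0) ^ 2 + (deriv (fun y => w y 0) x) ^ 2) :=
    intervalIntegral.integral_nonneg (by norm_num) fun x _ => by positivity
  have hI2nn : (0:ℝ) ≤ ∫ x in (0:ℝ)..1, (deriv (w x) 0) ^ 2 :=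
    intervalIntegral.integral_nonneg (by norm_num) fun x _ => sq_nonneg _
  set mx := max (Real.sqrt (∫ x in (0:ℝ)..1, ((w x 0) ^ 2 + (deriv (fun y => w y 0) x) ^ 2)))
      (Real.sqrt (∫ x in (0:ℝ)..1, (deriv (w x) 0) ^ 2)) with hmxdef
  have hmx0 : 0 ≤ mx := le_trans (Real.sqrt_nonneg _) (le_max_left _ _)
  have hle1 : (∫ x in (0:ℝ)..1, (W (x, 0) ^ 2 + Wx (x, 0) ^ 2)) ≤ mx ^ 2 := by
    rw [← hI1eq]
    calc (∫ x in (0:ℝ)..1, ((w x 0) ^ 2 + (deriv (fun y => w y 0) x) ^ 2))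
        = Real.sqrt (∫ x in (0:ℝ)..1, ((w x 0) ^ 2 + (deriv (fun y => w y 0) x) ^ 2)) ^ 2 :=
          (Real.sq_sqrt hI1nn).symm
      _ ≤ mx ^ 2 := by
          apply pow_le_pow_left₀ (Real.sqrt_nonneg _)
          rw [hmxdef]
          exact le_max_left _ _
  have hle2 : (∫ x in (0:ℝ)..1, Wt (x, 0) ^ 2) ≤ mx ^ 2 := by
    rw [← hI2eq]
    calc (∫ x in (0:ℝ)..1, (deriv (w x) 0) ^ 2)
        = Real.sqrt (∫ x in (0:ℝ)..1, (deriv (w x) 0) ^ 2) ^ 2 := (Real.sq_sqrt hI2nn).symm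
      _ ≤ mx ^ 2 := by
          apply pow_le_pow_left₀ (Real.sqrt_nonneg _)
          rw [hmxdef]
          exact le_max_right _ _
  -- bound V 0
  have hV0le : V 0 ≤ C * mx ^ 2 := by
    have hpt0 : ∀ x ∈ Set.Icc (0:ℝ) 1, f (x, 0) ≤
        2 * A * Real.exp κ * Wt (x, 0) ^ 2
          + (2 * A * Real.exp κ * a ^ 2 + 1) * (W (x, 0) ^ 2 + Wx (x, 0) ^ 2) := by
      intro x hx
      have hU2 : U (x, 0) ^ 2 ≤ 2 * Wt (x, 0) ^ 2 + 2 * a ^ 2 * Wx (x, 0) ^ 2 := by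
        rw [hUval]
        nlinarith [sq_nonneg (Wt (x, 0) - a * Wx (x, 0))]
      have hE1 : Real.exp (κ * x) ≤ Real.exp κ :=
        Real.exp_le_exp.2 (by nlinarith [hx.1, hx.2, hκpos])
      have hE2 : Real.exp (-(κ * x)) ≤ 1 := by
        have h := Real.exp_le_exp.2 (show -(κ * x) ≤ 0 by nlinarith [hx.1, hκpos])
        rwa [Real.exp_zero] at h
      simp only [hfdef]
      have hAE : A * Real.exp (κ * x) * U (x, 0) ^ 2
          ≤ A * Real.exp κ * (2 * Wt (x, 0) ^ 2 + 2 * a ^ 2 * Wx (x, 0) ^ 2) := by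
        have s1 : A * Real.exp (κ * x) * U (x, 0) ^ 2 ≤ A * Real.exp κ * U (x, 0) ^ 2 :=
          mul_le_mul_of_nonneg_right (mul_le_mul_of_nonneg_left hE1 hApos.le) (sq_nonneg _)
        have s2 : A * Real.exp κ * U (x, 0) ^ 2
            ≤ A * Real.exp κ * (2 * Wt (x, 0) ^ 2 + 2 * a ^ 2 * Wx (x, 0) ^ 2) :=
          mul_le_mul_of_nonneg_left hU2 (by positivity)
        linarith
      have hW2 : Real.exp (-(κ * x)) * W (x, 0) ^ 2 ≤ W (x, 0) ^ 2 := by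
        have h := mul_le_mul_of_nonneg_right hE2 (sq_nonneg (W (x, 0)))
        linarith
      have extra : (0:ℝ) ≤ 2 * A * Real.exp κ * a ^ 2 * W (x, 0) ^ 2 + Wx (x, 0) ^ 2 := by
        positivity
      nlinarith [hAE, hW2, extra]
    have hIrhs : IntervalIntegrable (fun x => 2 * A * Real.exp κ * Wt (x, 0) ^ 2
        + (2 * A * Real.exp κ * a ^ 2 + 1) * (W (x, 0) ^ 2 + Wx (x, 0) ^ 2)) volume 0 1 :=
      (hIWt0.const_mul _).add (hIW0.const_mul _)
    have hmono := intervalIntegral.integral_mono_on (by norm_num) (hIf 0) hIrhs hpt0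
    have hsplit : (∫ x in (0:ℝ)..1, (2 * A * Real.exp κ * Wt (x, 0) ^ 2
          + (2 * A * Real.exp κ * a ^ 2 + 1) * (W (x, 0) ^ 2 + Wx (x, 0) ^ 2)))
        = 2 * A * Real.exp κ * (∫ x in (0:ℝ)..1, Wt (x, 0) ^ 2)
          + (2 * A * Real.exp κ * a ^ 2 + 1) * (∫ x in (0:ℝ)..1, (W (x, 0) ^ 2 + Wx (x, 0) ^ 2)) := by
      rw [intervalIntegral.integral_add (hIWt0.const_mul _) (hIW0.const_mul _),
        intervalIntegral.integral_const_mul, intervalIntegral.integral_const_mul]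
    have c1 : (0:ℝ) ≤ 2 * A * Real.exp κ := by positivity
    have c2 : (0:ℝ) ≤ 2 * A * Real.exp κ * a ^ 2 + 1 := by positivity
    have b1 := mul_le_mul_of_nonneg_left hle2 c1
    have b2 := mul_le_mul_of_nonneg_left hle1 c2
    have hCeq : C * mx ^ 2 = 2 * A * Real.exp κ * mx ^ 2
        + (2 * A * Real.exp κ * a ^ 2 + 1) * mx ^ 2 := by
      rw [hCdef]; ring
    rw [hVdef]
    linarith [hmono, hsplit, b1, b2]
  -- pointwise bound w² ≤ exp κ * f and the final chain
  have hwint : (∫ x in (0:ℝ)..1, (w x t) ^ 2) ≤ Real.exp κ * V t := by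
    have hptw : ∀ x ∈ Set.Icc (0:ℝ) 1, (w x t) ^ 2 ≤ Real.exp κ * f (x, t) := by
      intro x hx
      simp only [hfdef]
      have h1 : (1:ℝ) ≤ Real.exp κ * Real.exp (-(κ * x)) := by
        rw [← Real.exp_add]
        have : (0:ℝ) ≤ κ + -(κ * x) := by nlinarith [hx.2, hκpos]
        calc (1:ℝ) = Real.exp 0 := Real.exp_zero.symm
          _ ≤ Real.exp (κ + -(κ * x)) := Real.exp_le_exp.2 this
      have h2 : W (x, t) ^ 2 ≤ Real.exp κ * Real.exp (-(κ * x)) * W (x, t) ^ 2 := by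
        nlinarith [sq_nonneg (W (x, t))]
      have h3 : (0:ℝ) ≤ Real.exp κ * (A * Real.exp (κ * x) * U (x, t) ^ 2) := by positivity
      have hwW : w x t = W (x, t) := by rw [hWdef]
      rw [hwW]
      nlinarith [h2, h3]
    have hIw : IntervalIntegrable (fun x => (w x t) ^ 2) volume 0 1 :=
      ((hslicecont W hWcont t).pow 2).intervalIntegrable 0 1
    have hmono := intervalIntegral.integral_mono_on (by norm_num) hIw
      ((hIf t).const_mul (Real.exp κ)) hptw
    rw [intervalIntegral.integral_const_mul] at hmono
    exact hmono
  have hfinal : (∫ x in (0:ℝ)..1, (w x t) ^ 2)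
      ≤ (Real.sqrt (Real.exp κ * C) * Real.exp (-γ * t) * mx) ^ 2 := by
    have hd := hdecay t ht.le
    have hm1 := mul_le_mul_of_nonneg_left hd (Real.exp_pos κ).le
    have hm2 := mul_le_mul_of_nonneg_left hV0le (Real.exp_pos (-(2 * γ) * t)).le
    have hm3 := mul_le_mul_of_nonneg_left hm2 (Real.exp_pos κ).le
    have hexp2 : Real.exp (-(2 * γ) * t) = Real.exp (-γ * t) ^ 2 := by
      have h : -(2 * γ) * t = -γ * t + -γ * t := by ring
      rw [h, Real.exp_add, sq]
    have hRHSeq : (Real.sqrt (Real.exp κ * C) * Real.exp (-γ * t) * mx) ^ 2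
        = Real.exp κ * (Real.exp (-(2 * γ) * t) * (C * mx ^ 2)) := by
      rw [mul_pow, mul_pow, Real.sq_sqrt (by positivity : (0:ℝ) ≤ Real.exp κ * C), hexp2]
      ring
    rw [hRHSeq]
    linarith [hwint, hm1, hm3]
  calc Real.sqrt (∫ x in (0:ℝ)..1, (w x t) ^ 2)
      ≤ Real.sqrt ((Real.sqrt (Real.exp κ * C) * Real.exp (-γ * t) * mx) ^ 2) :=
        Real.sqrt_le_sqrt hfinal
    _ = Real.sqrt (Real.exp κ * C) * Real.exp (-γ * t) * mx := by
        apply Real.sqrt_sq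
        exact mul_nonneg (mul_nonneg (Real.sqrt_nonneg _) (Real.exp_pos _).le) hmx0
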